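/- Let S be an RN module over ℝ with base (Ω, F, P), let E ∈ F̃ with P(E) > 0, and let x, y ∈ S with ‖x‖ = I_{A_{xy}} and ‖y‖ ≤ 1. If x and y are L⁰-independent on E, then there exist u_E, v_E ∈ S such that ‖u_E‖ = ‖v_E‖ = I_E and u_E − v_E = I_E(x − y). -/
import Mathlib


open MeasureTheory Filter Set

noncomputable section

namespace RNM

variable {Ω : Type*} [MeasurableSpace Ω]

/-- `L⁰(F, ℝ)`: equivalence classes of real random variables mod a.e. equality. -/
abbrev L0 (μ : Measure Ω) : Type _ := Ω →ₘ[μ] ℝ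

open Classical in
/-- The equivalence class of the indicator function of a (measurable) set. -/
noncomputable def ind (μ : Measure Ω) (A : Set Ω) : L0 μ :=
  if h : MeasurableSet A then
    AEEqFun.mk (A.indicator fun _ => (1 : ℝ)) (aestronglyMeasurable_const.indicator h)
  else 0

/-- The constant function, as an element of `L⁰`. -/
noncomputable def cst (μ : Measure Ω) (r : ℝ) : L0 μ := AEEqFun.const Ω r

/-- `A ⊂ B` modulo null sets. -/
def aeSub (μ : Measure Ω) (A B : Set Ω) : Prop := μ (A \ B) = 0

/-- `A = B` modulo null sets. -/
def aeEqS (μ : Measure Ω) (A B : Set Ω) : Prop := μ ((A \ B) ∪ (B \ A)) = 0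

variable {μ : Measure Ω} {S : Type*} [AddCommGroup S]

/-- The axioms of a random normed module over ℝ with base `(Ω, F, μ)`: `S` is a left module
over the algebra `L⁰(F,ℝ)` (with module multiplication `sm`) and `nrm` is an `L⁰`-norm. -/
structure IsRNModule (μ : Measure Ω) (sm : L0 μ → S → S) (nrm : S → L0 μ) : Prop where
  smul_add : ∀ ξ x y, sm ξ (x + y) = sm ξ x + sm ξ y
  add_smul : ∀ ξ η x, sm (ξ + η) x = sm ξ x + sm η x
  mul_smul : ∀ ξ η x, sm (ξ * η) x = sm ξ (sm η x)
  one_smul : ∀ x, sm 1 x = x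
  nrm_nonneg : ∀ x, 0 ≤ nrm x
  nrm_smul : ∀ ξ x, nrm (sm ξ x) = |ξ| * nrm x
  nrm_add : ∀ x y, nrm (x + y) ≤ nrm x + nrm y
  nrm_eq_zero : ∀ x, nrm x = 0 → x = 0

/-- `x` and `y` are `L⁰`-independent on `F`. -/
def Indep (sm : L0 μ → S → S) (x y : S) (F : Set Ω) : Prop :=
  ∀ ξ η : L0 μ, sm (ξ * ind μ F) x + sm (η * ind μ F) y = 0 →
    ξ * ind μ F = 0 ∧ η * ind μ F = 0

/-- `Rank_D(S) ≥ 2`. -/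
def RankGe2 (sm : L0 μ → S → S) (D : Set Ω) : Prop := ∃ x y : S, Indep sm x y D

/-- `A_x = [‖x‖ > 0]`. -/
def Aset (nrm : S → L0 μ) (x : S) : Set Ω := {ω | 0 < (nrm x) ω}

/-- `A_{xy} = A_x ∩ A_y`. -/
def Axy (nrm : S → L0 μ) (x y : S) : Set Ω := Aset nrm x ∩ Aset nrm y

/-- `B_{xy} = A_{xy} ∩ A_{x-y}`. -/
def Bxy (nrm : S → L0 μ) (x y : S) : Set Ω := Axy nrm x y ∩ Aset nrm (x - y)

/-- `H` is (a representative of) the support `H(S) = [⋁{‖x‖ : x ∈ S} > 0]`. -/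
def IsSupport (nrm : S → L0 μ) (H : Set Ω) : Prop :=
  MeasurableSet H ∧ (∀ x : S, aeSub μ (Aset nrm x) H) ∧
    ∀ B : Set Ω, MeasurableSet B → aeSub μ B H → 0 < μ B →
      ∃ x : S, 0 < μ (B ∩ Aset nrm x)

/-- A sequence in `S` is Cauchy for the topology of convergence in probability. -/
def CauchyInProb (μ : Measure Ω) (nrm : S → L0 μ) (u : ℕ → S) : Prop :=
  ∀ ε : ℝ, 0 < ε →
    Tendsto (fun p : ℕ × ℕ => μ {ω | ε ≤ |(nrm (u p.1 - u p.2)) ω|}) atTop (nhds 0)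

/-- `u n → x` in probability (i.e. `‖u n - x‖ → 0` in probability). -/
def TendstoInProb (μ : Measure Ω) (nrm : S → L0 μ) (u : ℕ → S) (x : S) : Prop :=
  ∀ ε : ℝ, 0 < ε →
    Tendsto (fun n => μ {ω | ε ≤ |(nrm (u n - x)) ω|}) atTop (nhds 0)

/-- Completeness of a random normed module. -/
def CompleteRN (μ : Measure Ω) (nrm : S → L0 μ) : Prop :=
  ∀ u : ℕ → S, CauchyInProb μ nrm u → ∃ x : S, TendstoInProb μ nrm u x

/-- The random unit sphere `S(1)`. -/
def sphere (nrm : S → L0 μ) : Set S :=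
  {x | ∃ A : Set Ω, MeasurableSet A ∧ 0 < μ A ∧ nrm x = ind μ A}

/-- The random closed unit ball `U(1)`. -/
def ball (nrm : S → L0 μ) : Set S := {x | nrm x ≤ 1}

/-- `ε` is an admissible random convexity parameter on `D`: `ε ≥ 0` and `0 < ε ≤ 2` on `D`. -/
def Admissible (μ : Measure Ω) (D : Set Ω) (ε : L0 μ) : Prop :=
  0 ≤ ε ∧ ∀ᵐ ω ∂μ, ω ∈ D → 0 < ε ω ∧ ε ω ≤ 2

/-- midpoint `(x+y)/2`. -/
def mid (μ : Measure Ω) (sm : L0 μ → S → S) (x y : S) : S := sm (cst μ (1/2)) (x + y)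

/-- The set whose infimum (in the a.s. order of `L⁰`) is the modulus of random
convexity `δ_D(ε)`. -/
def modSet (μ : Measure Ω) (sm : L0 μ → S → S) (nrm : S → L0 μ) (D : Set Ω) (ε : L0 μ) :
    Set (L0 μ) :=
  {z | ∃ x ∈ sphere nrm, ∃ y ∈ sphere nrm, aeSub μ D (Bxy nrm x y) ∧
    ε * ind μ D ≤ ind μ D * nrm (x - y) ∧
    z = ind μ D - ind μ D * nrm (mid μ sm x y)}

/-- `S` is random uniformly convex: `δ_{H(S)}(ε) > 0` on `H(S)` for every admissible `ε`. -/
def RandomUniformlyConvex (μ : Measure Ω) (sm : L0 μ → S → S) (nrm : S → L0 μ)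
    (H : Set Ω) : Prop :=
  ∀ ε : L0 μ, Admissible μ H ε → ∀ d : L0 μ, IsGLB (modSet μ sm nrm H ε) d →
    ∀ᵐ ω ∂μ, ω ∈ H → 0 < d ω

/-- `G` is (a representative of) `G(S)`. -/
def IsGSet (μ : Measure Ω) (sm : L0 μ → S → S) (H G : Set Ω) : Prop :=
  MeasurableSet G ∧ aeSub μ G H ∧ 0 < μ G ∧ RankGe2 sm G ∧
    ∀ D : Set Ω, MeasurableSet D → aeSub μ D (H \ G) → 0 < μ D → ¬ RankGe2 sm D


-- ### auxiliary lemmas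
section Aux31
variable {sm : L0 μ → S → S} {nrm : S → L0 μ}

theorem l0_ext {f g : L0 μ} (h : ⇑f =ᵐ[μ] ⇑g) : f = g := AEEqFun.ext h

theorem ind_coe {A : Set Ω} (hA : MeasurableSet A) :
    ⇑(ind μ A) =ᵐ[μ] A.indicator (fun _ => (1 : ℝ)) := by
  rw [ind, dif_pos hA]; exact AEEqFun.coeFn_mk _ _

theorem ind_le_one (A : Set Ω) : ind μ A ≤ 1 := by
  rw [← AEEqFun.coeFn_le]
  by_cases hA : MeasurableSet A
  · filter_upwards [ind_coe hA, AEEqFun.coeFn_one (β := ℝ) (μ := μ)] with ω h1 h2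
    rw [h1, h2]
    by_cases hw : ω ∈ A <;> simp [hw]
  · rw [ind, dif_neg hA]
    filter_upwards [AEEqFun.coeFn_zero (β := ℝ) (μ := μ), AEEqFun.coeFn_one (β := ℝ) (μ := μ)]
      with ω h1 h2
    rw [h1, h2]; norm_num

theorem null_of_ind_eq_zero {F : Set Ω} (hF : MeasurableSet F) (h0 : ind μ F = 0) :
    μ F = 0 := by
  have h1 : (F.indicator (fun _ => (1:ℝ))) =ᵐ[μ] 0 := by
    have h2 := (ind_coe (μ := μ) hF).symm
    rw [h0] at h2
    exact h2.trans (AEEqFun.coeFn_zero (β := ℝ) (μ := μ))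
  have h2 : μ {ω | ¬ (F.indicator (fun _ => (1:ℝ)) ω = (0 : Ω → ℝ) ω)} = 0 := h1
  refine measure_mono_null (fun ω hω => ?_) h2
  simp only [Set.mem_setOf_eq, Pi.zero_apply, Set.indicator_of_mem hω]
  norm_num

namespace IsRNModule
variable (h : IsRNModule μ sm nrm)
include h

theorem smul_zero' (ξ : L0 μ) : sm ξ (0 : S) = 0 := by
  have h0 := h.smul_add ξ 0 0
  rw [add_zero] at h0
  exact (left_eq_add.mp h0)

theorem zero_smul' (z : S) : sm 0 z = 0 := by
  have h0 := h.add_smul 0 0 z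
  rw [add_zero] at h0
  exact (left_eq_add.mp h0)

theorem neg_smul' (ξ : L0 μ) (z : S) : sm (-ξ) z = -(sm ξ z) := by
  have h0 := h.add_smul ξ (-ξ) z
  rw [add_neg_cancel, h.zero_smul'] at h0
  exact (eq_neg_of_add_eq_zero_right h0.symm)

theorem smul_neg' (ξ : L0 μ) (z : S) : sm ξ (-z) = -(sm ξ z) := by
  have h0 := h.smul_add ξ z (-z)
  rw [add_neg_cancel, h.smul_zero'] at h0
  exact (eq_neg_of_add_eq_zero_right h0.symm)

theorem smul_sub' (ξ : L0 μ) (z w : S) : sm ξ (z - w) = sm ξ z - sm ξ w := by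
  rw [sub_eq_add_neg, h.smul_add, h.smul_neg', sub_eq_add_neg]

theorem sub_smul' (ξ η : L0 μ) (z : S) : sm (ξ - η) z = sm ξ z - sm η z := by
  rw [sub_eq_add_neg, h.add_smul, h.neg_smul', sub_eq_add_neg]

theorem nrm_zero' : nrm (0 : S) = 0 := by
  have h0 : nrm (0 : S) = |(0 : L0 μ)| * nrm (0 : S) := by
    rw [← h.nrm_smul, h.zero_smul']
  rw [h0]
  refine l0_ext ?_
  filter_upwards [AEEqFun.coeFn_mul |(0 : L0 μ)| (nrm (0:S)),
    AEEqFun.coeFn_abs (0 : L0 μ), AEEqFun.coeFn_zero (β := ℝ) (μ := μ)] with ω h1 h2 h3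
  simp only [h1, Pi.mul_apply, h2, h3, Pi.zero_apply, abs_zero, zero_mul]

theorem nrm_neg' (z : S) : nrm (-z) = nrm z := by
  have h1 : -z = sm (-(1 : L0 μ)) z := by rw [h.neg_smul', h.one_smul]
  rw [h1, h.nrm_smul]
  refine l0_ext ?_
  filter_upwards [AEEqFun.coeFn_mul |(-(1:L0 μ))| (nrm z), AEEqFun.coeFn_abs (-(1 : L0 μ)),
    AEEqFun.coeFn_neg (1 : L0 μ), AEEqFun.coeFn_one (β := ℝ) (μ := μ)] with ω h1 h2 h3 h4
  simp only [h1, Pi.mul_apply, h2, h3, Pi.neg_apply, h4, Pi.one_apply]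
  norm_num

theorem nrm_le_add' (z w : S) : nrm z ≤ nrm w + nrm (z - w) := by
  have h0 := h.nrm_add w (z - w)
  rwa [add_sub_cancel] at h0

end IsRNModule
end Aux31
-- ### the random norm as a function of coefficients
section NV
variable (μ : Measure Ω) {S : Type*} [AddCommGroup S]
variable (sm : L0 μ → S → S) (nrm : S → L0 μ) (x y : S)

/-- the norm of `p₁ x + p₂ y` for rational constants. -/
noncomputable def phiQ (r : ℚ × ℚ) : L0 μ :=
  nrm (sm (cst μ (r.1 : ℝ)) x + sm (cst μ (r.2 : ℝ)) y)

/-- pointwise norm function on `ℝ²` built from rational evaluations. -/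
noncomputable def NV (ω : Ω) (v : ℝ × ℝ) : ℝ :=
  ⨅ r : ℚ × ℚ, (max (phiQ μ sm nrm x y r ω) 0 + |v.1 - (r.1 : ℝ)| + |v.2 - (r.2 : ℝ)|)

variable {μ sm nrm x y}

theorem NV_bddBelow (ω : Ω) (v : ℝ × ℝ) : BddBelow (Set.range fun r : ℚ × ℚ =>
    max (phiQ μ sm nrm x y r ω) 0 + |v.1 - (r.1 : ℝ)| + |v.2 - (r.2 : ℝ)|) := by
  refine ⟨0, ?_⟩
  rintro t ⟨r, rfl⟩
  positivity

theorem NV_nonneg (ω : Ω) (v : ℝ × ℝ) : 0 ≤ NV μ sm nrm x y ω v :=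
  le_ciInf fun r => by positivity

theorem NV_le (ω : Ω) (v : ℝ × ℝ) (r : ℚ × ℚ) :
    NV μ sm nrm x y ω v ≤ max (phiQ μ sm nrm x y r ω) 0 + |v.1 - (r.1 : ℝ)| + |v.2 - (r.2 : ℝ)| :=
  ciInf_le (NV_bddBelow ω v) r

theorem le_NV {c : ℝ} (ω : Ω) (v : ℝ × ℝ)
    (hc : ∀ r : ℚ × ℚ, c ≤ max (phiQ μ sm nrm x y r ω) 0 + |v.1 - (r.1 : ℝ)| + |v.2 - (r.2 : ℝ)|) :
    c ≤ NV μ sm nrm x y ω v :=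
  le_ciInf hc

theorem NV_lip_le (ω : Ω) (v v' : ℝ × ℝ) :
    NV μ sm nrm x y ω v ≤ NV μ sm nrm x y ω v' + (|v.1 - v'.1| + |v.2 - v'.2|) := by
  rw [← sub_le_iff_le_add]
  refine le_NV ω v' fun r => ?_
  rw [sub_le_iff_le_add]
  have h1 := NV_le (μ := μ) (sm := sm) (nrm := nrm) (x := x) (y := y) ω v r
  have h2 : |v.1 - (r.1:ℝ)| ≤ |v'.1 - (r.1:ℝ)| + |v.1 - v'.1| := by
    have := abs_sub_le v.1 v'.1 (r.1 : ℝ); linarith [this]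
  have h3 : |v.2 - (r.2:ℝ)| ≤ |v'.2 - (r.2:ℝ)| + |v.2 - v'.2| := by
    have := abs_sub_le v.2 v'.2 (r.2 : ℝ); linarith [this]
  linarith

theorem NV_lip (ω : Ω) (v v' : ℝ × ℝ) :
    |NV μ sm nrm x y ω v - NV μ sm nrm x y ω v'| ≤ |v.1 - v'.1| + |v.2 - v'.2| := by
  rw [abs_sub_le_iff]
  constructor
  · have := NV_lip_le (μ := μ) (sm := sm) (nrm := nrm) (x := x) (y := y) ω v v'; linarith
  · have := NV_lip_le (μ := μ) (sm := sm) (nrm := nrm) (x := x) (y := y) ω v' v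
    rw [abs_sub_comm v'.1 v.1, abs_sub_comm v'.2 v.2] at this; linarith

theorem NV_meas {f g : Ω → ℝ} (hf : Measurable f) (hg : Measurable g) :
    Measurable fun ω => NV μ sm nrm x y ω (f ω, g ω) := by
  refine Measurable.iInf fun r => ?_
  refine Measurable.add (Measurable.add ?_ ?_) ?_
  · exact ((phiQ μ sm nrm x y r).measurable.max measurable_const)
  · exact (hf.sub measurable_const).abs
  · exact (hg.sub measurable_const).abs

theorem NV_cont (ω : Ω) : Continuous (NV μ sm nrm x y ω) := by
  have hl : LipschitzWith 2 (NV μ sm nrm x y ω) := by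
    refine LipschitzWith.of_dist_le_mul fun v v' => ?_
    rw [Real.dist_eq]
    refine le_trans (NV_lip ω v v') ?_
    have h1 : |v.1 - v'.1| ≤ dist v v' := by
      rw [Prod.dist_eq]; exact le_trans (le_of_eq (Real.dist_eq _ _).symm) (le_max_left _ _)
    have h2 : |v.2 - v'.2| ≤ dist v v' := by
      rw [Prod.dist_eq]; exact le_trans (le_of_eq (Real.dist_eq _ _).symm) (le_max_right _ _)
    push_cast
    linarith

  exact hl.continuous

end NV
-- ### the pointwise formula
section Formula
variable {S : Type*} [AddCommGroup S] {sm : L0 μ → S → S} {nrm : S → L0 μ} {x y : S}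

theorem nrm_lip_ae (h : IsRNModule μ sm nrm) (hx1 : nrm x ≤ 1) (hy1 : nrm y ≤ 1)
    (a b a' b' : L0 μ) :
    ∀ᵐ ω ∂μ, nrm (sm a x + sm b y) ω
      ≤ nrm (sm a' x + sm b' y) ω + (|a ω - a' ω| + |b ω - b' ω|) := by
  set z := sm a x + sm b y with hz
  set z' := sm a' x + sm b' y with hz'
  have hzz : z - z' = sm (a - a') x + sm (b - b') y := by
    rw [hz, hz', h.sub_smul', h.sub_smul']; abel
  have h1 : nrm z ≤ nrm z' + nrm (z - z') := h.nrm_le_add' z z'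
  have h2 : nrm (z - z') ≤ |a - a'| * nrm x + |b - b'| * nrm y := by
    rw [hzz, ← h.nrm_smul (a - a') x, ← h.nrm_smul (b - b') y]
    exact h.nrm_add _ _
  filter_upwards [AEEqFun.coeFn_le.mpr h1, AEEqFun.coeFn_le.mpr h2,
    AEEqFun.coeFn_add (nrm z') (nrm (z - z')),
    AEEqFun.coeFn_add (|a - a'| * nrm x) (|b - b'| * nrm y),
    AEEqFun.coeFn_mul |a - a'| (nrm x), AEEqFun.coeFn_mul |b - b'| (nrm y),
    AEEqFun.coeFn_abs (a - a'), AEEqFun.coeFn_abs (b - b'),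
    AEEqFun.coeFn_sub a a', AEEqFun.coeFn_sub b b',
    AEEqFun.coeFn_le.mpr hx1, AEEqFun.coeFn_le.mpr hy1,
    AEEqFun.coeFn_le.mpr (h.nrm_nonneg x), AEEqFun.coeFn_le.mpr (h.nrm_nonneg y),
    AEEqFun.coeFn_one (β := ℝ) (μ := μ), AEEqFun.coeFn_zero (β := ℝ) (μ := μ)]
    with ω e1 e2 e3 e4 e5 e6 e7 e8 e9 e10 e11 e12 e13 e14 e15 e16
  rw [e3, Pi.add_apply] at e1
  rw [e4, Pi.add_apply, e5, e6, Pi.mul_apply, Pi.mul_apply, e7, e8, e9, e10,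
    Pi.sub_apply, Pi.sub_apply] at e2
  rw [e15, Pi.one_apply] at e11 e12
  rw [e16, Pi.zero_apply] at e13 e14
  have m1 : |a ω - a' ω| * (nrm x) ω ≤ |a ω - a' ω| := by
    have := mul_le_mul_of_nonneg_left e11 (abs_nonneg (a ω - a' ω)); simpa using this
  have m2 : |b ω - b' ω| * (nrm y) ω ≤ |b ω - b' ω| := by
    have := mul_le_mul_of_nonneg_left e12 (abs_nonneg (b ω - b' ω)); simpa using this
  linarith

theorem nrm_lip_abs_ae (h : IsRNModule μ sm nrm) (hx1 : nrm x ≤ 1) (hy1 : nrm y ≤ 1)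
    (a b a' b' : L0 μ) :
    ∀ᵐ ω ∂μ, |nrm (sm a x + sm b y) ω - nrm (sm a' x + sm b' y) ω|
      ≤ |a ω - a' ω| + |b ω - b' ω| := by
  filter_upwards [nrm_lip_ae h hx1 hy1 a b a' b', nrm_lip_ae h hx1 hy1 a' b' a b] with ω e1 e2
  rw [abs_sub_comm (a' ω) (a ω), abs_sub_comm (b' ω) (b ω)] at e2
  rw [abs_sub_le_iff]
  constructor <;> linarith

theorem NV_eq_phiQ_ae (h : IsRNModule μ sm nrm) (hx1 : nrm x ≤ 1) (hy1 : nrm y ≤ 1) :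
    ∀ᵐ ω ∂μ, ∀ r : ℚ × ℚ,
      NV μ sm nrm x y ω (((r.1 : ℝ)), ((r.2 : ℝ))) = phiQ μ sm nrm x y r ω := by
  have key : ∀ᵐ ω ∂μ, ∀ p : (ℚ × ℚ) × (ℚ × ℚ),
      phiQ μ sm nrm x y p.1 ω ≤ phiQ μ sm nrm x y p.2 ω
        + (|(p.1.1 : ℝ) - (p.2.1 : ℝ)| + |(p.1.2 : ℝ) - (p.2.2 : ℝ)|) := by
    rw [ae_all_iff]
    intro p
    have base := nrm_lip_ae h hx1 hy1 (cst μ (p.1.1 : ℝ)) (cst μ (p.1.2 : ℝ))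
      (cst μ (p.2.1 : ℝ)) (cst μ (p.2.2 : ℝ))
    filter_upwards [base, AEEqFun.coeFn_const (α := Ω) (μ := μ) ((p.1.1 : ℝ)),
      AEEqFun.coeFn_const (α := Ω) (μ := μ) ((p.1.2 : ℝ)),
      AEEqFun.coeFn_const (α := Ω) (μ := μ) ((p.2.1 : ℝ)),
      AEEqFun.coeFn_const (α := Ω) (μ := μ) ((p.2.2 : ℝ))] with ω e0 e1 e2 e3 e4
    simp only [phiQ, cst] at e0 ⊢
    rw [e1, e2, e3, e4] at e0
    exact e0
  have nng : ∀ᵐ ω ∂μ, ∀ r : ℚ × ℚ, 0 ≤ phiQ μ sm nrm x y r ω := by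
    rw [ae_all_iff]
    intro r
    filter_upwards [AEEqFun.coeFn_le.mpr (h.nrm_nonneg (sm (cst μ (r.1 : ℝ)) x
      + sm (cst μ (r.2 : ℝ)) y)), AEEqFun.coeFn_zero (β := ℝ) (μ := μ)] with ω e1 e2
    rw [e2, Pi.zero_apply] at e1
    exact e1
  filter_upwards [key, nng] with ω hk hn
  intro r
  refine le_antisymm ?_ ?_
  · refine le_trans (NV_le ω _ r) ?_
    rw [max_eq_left (hn r)]
    simp
  · refine le_NV ω _ fun r' => ?_
    have h1 : phiQ μ sm nrm x y r ω ≤ phiQ μ sm nrm x y r' ω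
        + (|(r.1 : ℝ) - (r'.1 : ℝ)| + |(r.2 : ℝ) - (r'.2 : ℝ)|) := hk ⟨r, r'⟩
    have h3 := le_max_left (phiQ μ sm nrm x y r' ω) 0
    linarith

/-- rational-valued discretization of `a` at scale `1/(n+1)`. -/
noncomputable def dq (μ : Measure Ω) (a : L0 μ) (n : ℕ) : L0 μ :=
  AEEqFun.mk (fun ω => (⌊a ω * ((n : ℝ) + 1)⌋ : ℝ) / ((n : ℝ) + 1))
    ((((measurable_from_top.comp ((a.measurable.mul_const _).floor))).div_const _).aestronglyMeasurable)

theorem floor_div_bound (t : ℝ) (n : ℕ) :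
    |t - (⌊t * ((n : ℝ) + 1)⌋ : ℝ) / ((n : ℝ) + 1)| ≤ 1 / ((n : ℝ) + 1) := by
  have hn : (0 : ℝ) < (n : ℝ) + 1 := by positivity
  have h1 : (⌊t * ((n : ℝ) + 1)⌋ : ℝ) ≤ t * ((n : ℝ) + 1) := Int.floor_le _
  have h2 : t * ((n : ℝ) + 1) < (⌊t * ((n : ℝ) + 1)⌋ : ℝ) + 1 := Int.lt_floor_add_one _
  have e : t - (⌊t * ((n : ℝ) + 1)⌋ : ℝ) / ((n : ℝ) + 1)
      = (t * ((n : ℝ) + 1) - (⌊t * ((n : ℝ) + 1)⌋ : ℝ)) / ((n : ℝ) + 1) := by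
    field_simp
  rw [e, abs_div, abs_of_pos hn]
  gcongr
  rw [abs_le]
  constructor <;> linarith
end Formula
section Formula2
variable {S : Type*} [AddCommGroup S] {sm : L0 μ → S → S} {nrm : S → L0 μ} {x y : S}

theorem step_dq (h : IsRNModule μ sm nrm) (hx1 : nrm x ≤ 1) (hy1 : nrm y ≤ 1)
    (a b : L0 μ) (n : ℕ) :
    ∀ᵐ ω ∂μ, nrm (sm (dq μ a n) x + sm (dq μ b n) y) ω
      = NV μ sm nrm x y ω ((⌊a ω * ((n : ℝ) + 1)⌋ : ℝ) / ((n : ℝ) + 1),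
          (⌊b ω * ((n : ℝ) + 1)⌋ : ℝ) / ((n : ℝ) + 1)) := by
  have main : ∀ kj : ℤ × ℤ, ∀ᵐ ω ∂μ,
      (⌊a ω * ((n : ℝ) + 1)⌋ = kj.1 ∧ ⌊b ω * ((n : ℝ) + 1)⌋ = kj.2) →
      nrm (sm (dq μ a n) x + sm (dq μ b n) y) ω
        = phiQ μ sm nrm x y ((kj.1 : ℚ) / ((n : ℚ) + 1), (kj.2 : ℚ) / ((n : ℚ) + 1)) ω := by
    rintro ⟨k, j⟩
    set A : Set Ω := {ω | ⌊a ω * ((n : ℝ) + 1)⌋ = k ∧ ⌊b ω * ((n : ℝ) + 1)⌋ = j} with hAdef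
    have hA : MeasurableSet A := by
      refine MeasurableSet.inter ?_ ?_
      · exact ((a.measurable.mul_const _).floor) (measurableSet_singleton k)
      · exact ((b.measurable.mul_const _).floor) (measurableSet_singleton j)
    have c1 : ind μ A * dq μ a n = ind μ A * cst μ (((k : ℚ) / ((n : ℚ) + 1) : ℚ) : ℝ) := by
      refine l0_ext ?_
      filter_upwards [AEEqFun.coeFn_mul (ind μ A) (dq μ a n),
        AEEqFun.coeFn_mul (ind μ A) (cst μ (((k : ℚ) / ((n : ℚ) + 1) : ℚ) : ℝ)),
        ind_coe hA, AEEqFun.coeFn_mk (μ := μ)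
          (fun ω => (⌊a ω * ((n : ℝ) + 1)⌋ : ℝ) / ((n : ℝ) + 1)) _,
        AEEqFun.coeFn_const (α := Ω) (μ := μ) (((k : ℚ) / ((n : ℚ) + 1) : ℚ) : ℝ)]
        with ω e1 e2 e3 e4 e5
      rw [e1, e2, Pi.mul_apply, Pi.mul_apply, e3]
      simp only [cst]
      rw [e5]
      have e4' : (dq μ a n) ω = (⌊a ω * ((n : ℝ) + 1)⌋ : ℝ) / ((n : ℝ) + 1) := e4
      rw [e4']
      by_cases hω : ω ∈ A
      · rw [Set.indicator_of_mem hω]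
        have hk : ⌊a ω * ((n : ℝ) + 1)⌋ = k := hω.1
        rw [hk]
        simp only [Function.const_apply]
        push_cast
        ring
      · rw [Set.indicator_of_notMem hω]
        ring
    have c2 : ind μ A * dq μ b n = ind μ A * cst μ (((j : ℚ) / ((n : ℚ) + 1) : ℚ) : ℝ) := by
      refine l0_ext ?_
      filter_upwards [AEEqFun.coeFn_mul (ind μ A) (dq μ b n),
        AEEqFun.coeFn_mul (ind μ A) (cst μ (((j : ℚ) / ((n : ℚ) + 1) : ℚ) : ℝ)),
        ind_coe hA, AEEqFun.coeFn_mk (μ := μ)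
          (fun ω => (⌊b ω * ((n : ℝ) + 1)⌋ : ℝ) / ((n : ℝ) + 1)) _,
        AEEqFun.coeFn_const (α := Ω) (μ := μ) (((j : ℚ) / ((n : ℚ) + 1) : ℚ) : ℝ)]
        with ω e1 e2 e3 e4 e5
      rw [e1, e2, Pi.mul_apply, Pi.mul_apply, e3]
      simp only [cst]
      rw [e5]
      have e4' : (dq μ b n) ω = (⌊b ω * ((n : ℝ) + 1)⌋ : ℝ) / ((n : ℝ) + 1) := e4
      rw [e4']
      by_cases hω : ω ∈ A
      · rw [Set.indicator_of_mem hω]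
        have hk : ⌊b ω * ((n : ℝ) + 1)⌋ = j := hω.2
        rw [hk]
        simp only [Function.const_apply]
        push_cast
        ring
      · rw [Set.indicator_of_notMem hω]
        ring
    have key : sm (ind μ A) (sm (dq μ a n) x + sm (dq μ b n) y)
        = sm (ind μ A) (sm (cst μ (((k : ℚ) / ((n : ℚ) + 1) : ℚ) : ℝ)) x
            + sm (cst μ (((j : ℚ) / ((n : ℚ) + 1) : ℚ) : ℝ)) y) := by
      rw [h.smul_add, h.smul_add, ← h.mul_smul, ← h.mul_smul, ← h.mul_smul, ← h.mul_smul,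
        c1, c2]
    have nkey : |ind μ A| * nrm (sm (dq μ a n) x + sm (dq μ b n) y)
        = |ind μ A| * phiQ μ sm nrm x y ((k : ℚ) / ((n : ℚ) + 1), (j : ℚ) / ((n : ℚ) + 1)) := by
      simp only [phiQ]
      rw [← h.nrm_smul, ← h.nrm_smul, key]
    have nkey' := congrArg (fun f : L0 μ => ⇑f) nkey
    filter_upwards [AEEqFun.coeFn_mul |ind μ A|
        (nrm (sm (dq μ a n) x + sm (dq μ b n) y)),
      AEEqFun.coeFn_mul |ind μ A|
        (phiQ μ sm nrm x y ((k : ℚ) / ((n : ℚ) + 1), (j : ℚ) / ((n : ℚ) + 1))),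
      AEEqFun.coeFn_abs (ind μ A), ind_coe hA] with ω e1 e2 e3 e4
    intro hω
    have hωA : ω ∈ A := hω
    have ee : (|ind μ A| * nrm (sm (dq μ a n) x + sm (dq μ b n) y)) ω
        = (|ind μ A| * phiQ μ sm nrm x y ((k : ℚ) / ((n : ℚ) + 1), (j : ℚ) / ((n : ℚ) + 1))) ω :=
      congrFun nkey' ω
    rw [e1, e2, Pi.mul_apply, Pi.mul_apply, e3, e4, Set.indicator_of_mem hωA] at ee
    simpa using ee
  have allmain : ∀ᵐ ω ∂μ, ∀ kj : ℤ × ℤ,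
      (⌊a ω * ((n : ℝ) + 1)⌋ = kj.1 ∧ ⌊b ω * ((n : ℝ) + 1)⌋ = kj.2) →
      nrm (sm (dq μ a n) x + sm (dq μ b n) y) ω
        = phiQ μ sm nrm x y ((kj.1 : ℚ) / ((n : ℚ) + 1), (kj.2 : ℚ) / ((n : ℚ) + 1)) ω :=
    ae_all_iff.mpr main
  filter_upwards [allmain, NV_eq_phiQ_ae h hx1 hy1] with ω h1 h2
  have h3 := h1 (⌊a ω * ((n : ℝ) + 1)⌋, ⌊b ω * ((n : ℝ) + 1)⌋) ⟨rfl, rfl⟩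
  have h4 := h2 ((⌊a ω * ((n : ℝ) + 1)⌋ : ℚ) / ((n : ℚ) + 1),
    (⌊b ω * ((n : ℝ) + 1)⌋ : ℚ) / ((n : ℚ) + 1))
  have ca : (((⌊a ω * ((n : ℝ) + 1)⌋ : ℚ) / ((n : ℚ) + 1) : ℚ) : ℝ)
      = (⌊a ω * ((n : ℝ) + 1)⌋ : ℝ) / ((n : ℝ) + 1) := by push_cast; ring
  have cb : (((⌊b ω * ((n : ℝ) + 1)⌋ : ℚ) / ((n : ℚ) + 1) : ℚ) : ℝ)
      = (⌊b ω * ((n : ℝ) + 1)⌋ : ℝ) / ((n : ℝ) + 1) := by push_cast; ring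
  rw [ca, cb] at h4
  rw [h3, ← h4]

theorem formula (h : IsRNModule μ sm nrm) (hx1 : nrm x ≤ 1) (hy1 : nrm y ≤ 1) (a b : L0 μ) :
    ∀ᵐ ω ∂μ, nrm (sm a x + sm b y) ω = NV μ sm nrm x y ω (a ω, b ω) := by
  have hdqa : ∀ᵐ ω ∂μ, ∀ n : ℕ,
      (dq μ a n) ω = (⌊a ω * ((n : ℝ) + 1)⌋ : ℝ) / ((n : ℝ) + 1) ∧
      (dq μ b n) ω = (⌊b ω * ((n : ℝ) + 1)⌋ : ℝ) / ((n : ℝ) + 1) := by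
    rw [ae_all_iff]
    intro n
    filter_upwards [AEEqFun.coeFn_mk (μ := μ)
        (fun ω => (⌊a ω * ((n : ℝ) + 1)⌋ : ℝ) / ((n : ℝ) + 1)) _,
      AEEqFun.coeFn_mk (μ := μ)
        (fun ω => (⌊b ω * ((n : ℝ) + 1)⌋ : ℝ) / ((n : ℝ) + 1)) _] with ω e1 e2
    exact ⟨e1, e2⟩
  have lipn : ∀ᵐ ω ∂μ, ∀ n : ℕ,
      |nrm (sm a x + sm b y) ω - nrm (sm (dq μ a n) x + sm (dq μ b n) y) ω|
        ≤ |a ω - (dq μ a n) ω| + |b ω - (dq μ b n) ω| :=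
    ae_all_iff.mpr fun n => nrm_lip_abs_ae h hx1 hy1 a b (dq μ a n) (dq μ b n)
  have stepn : ∀ᵐ ω ∂μ, ∀ n : ℕ,
      nrm (sm (dq μ a n) x + sm (dq μ b n) y) ω
        = NV μ sm nrm x y ω ((⌊a ω * ((n : ℝ) + 1)⌋ : ℝ) / ((n : ℝ) + 1),
            (⌊b ω * ((n : ℝ) + 1)⌋ : ℝ) / ((n : ℝ) + 1)) :=
    ae_all_iff.mpr fun n => step_dq h hx1 hy1 a b n
  filter_upwards [hdqa, lipn, stepn] with ω e1 e2 e3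
  set D := nrm (sm a x + sm b y) ω - NV μ sm nrm x y ω (a ω, b ω) with hD
  have bound : ∀ n : ℕ, |D| ≤ 4 * (1 / ((n : ℝ) + 1)) := by
    intro n
    have f1 : |a ω - (dq μ a n) ω| ≤ 1 / ((n : ℝ) + 1) := by
      rw [(e1 n).1]; exact floor_div_bound (a ω) n
    have f2 : |b ω - (dq μ b n) ω| ≤ 1 / ((n : ℝ) + 1) := by
      rw [(e1 n).2]; exact floor_div_bound (b ω) n
    have l1 := e2 n
    have l2 : |NV μ sm nrm x y ω ((⌊a ω * ((n : ℝ) + 1)⌋ : ℝ) / ((n : ℝ) + 1),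
        (⌊b ω * ((n : ℝ) + 1)⌋ : ℝ) / ((n : ℝ) + 1)) - NV μ sm nrm x y ω (a ω, b ω)|
        ≤ |(⌊a ω * ((n : ℝ) + 1)⌋ : ℝ) / ((n : ℝ) + 1) - a ω|
          + |(⌊b ω * ((n : ℝ) + 1)⌋ : ℝ) / ((n : ℝ) + 1) - b ω| := NV_lip ω _ _
    rw [abs_sub_comm ((⌊a ω * ((n : ℝ) + 1)⌋ : ℝ) / ((n : ℝ) + 1)) (a ω),
      abs_sub_comm ((⌊b ω * ((n : ℝ) + 1)⌋ : ℝ) / ((n : ℝ) + 1)) (b ω)] at l2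
    have f1' : |a ω - (⌊a ω * ((n : ℝ) + 1)⌋ : ℝ) / ((n : ℝ) + 1)| ≤ 1 / ((n : ℝ) + 1) :=
      floor_div_bound (a ω) n
    have f2' : |b ω - (⌊b ω * ((n : ℝ) + 1)⌋ : ℝ) / ((n : ℝ) + 1)| ≤ 1 / ((n : ℝ) + 1) :=
      floor_div_bound (b ω) n
    have tri : |D| ≤ |nrm (sm a x + sm b y) ω - nrm (sm (dq μ a n) x + sm (dq μ b n) y) ω|
        + |nrm (sm (dq μ a n) x + sm (dq μ b n) y) ω - NV μ sm nrm x y ω (a ω, b ω)| := by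
      rw [hD]
      exact abs_sub_le _ _ _
    have l2' : |nrm (sm (dq μ a n) x + sm (dq μ b n) y) ω - NV μ sm nrm x y ω (a ω, b ω)|
        ≤ |a ω - (⌊a ω * ((n : ℝ) + 1)⌋ : ℝ) / ((n : ℝ) + 1)|
          + |b ω - (⌊b ω * ((n : ℝ) + 1)⌋ : ℝ) / ((n : ℝ) + 1)| := by
      rw [e3 n]; exact l2
    linarith
  have hD0 : |D| ≤ 0 := by
    by_contra hc
    push_neg at hc
    obtain ⟨n, hn⟩ := exists_nat_gt (4 / |D|)
    have hb := bound n
    have h4 : 4 < |D| * ((n : ℝ) + 1) := by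
      have := (div_lt_iff₀ hc).mp hn
      nlinarith [abs_nonneg D]
    have h5 : |D| * ((n : ℝ) + 1) ≤ 4 := by
      have hn1 : (0 : ℝ) < (n : ℝ) + 1 := by positivity
      calc |D| * ((n : ℝ) + 1) ≤ (4 * (1 / ((n : ℝ) + 1))) * ((n : ℝ) + 1) := by
            exact mul_le_mul_of_nonneg_right hb (le_of_lt hn1)
        _ = 4 := by field_simp
    linarith
  have : D = 0 := abs_eq_zero.mp (le_antisymm hD0 (abs_nonneg D))
  linarith [this, hD ▸ this]
end Formula2
-- ### the curve, IVT, and the parameter τ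
section Curve
variable {S : Type*} [AddCommGroup S]

/-- first coordinate of the curve joining `(1,-1)` to `(-1,1)` avoiding `0`. -/
def cc1 (t : ℝ) : ℝ := 1 - t - t ^ 2
/-- second coordinate of the curve. -/
def cc2 (t : ℝ) : ℝ := 2 * t - 1

theorem cc_ne_zero (t : ℝ) : ¬(cc1 t = 0 ∧ cc2 t = 0) := by
  rintro ⟨h1, h2⟩
  rw [cc1] at h1; rw [cc2] at h2
  nlinarith

theorem cc1_cont : Continuous cc1 := by
  unfold cc1; continuity

theorem cc2_cont : Continuous cc2 := by
  unfold cc2; continuity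

variable (μ : Measure Ω) (sm : L0 μ → S → S) (nrm : S → L0 μ) (x y : S)

/-- the IVT functional along the curve. -/
noncomputable def GG (ω : Ω) (t : ℝ) : ℝ :=
  NV μ sm nrm x y ω (cc1 t - NV μ sm nrm x y ω (cc1 t, cc2 t),
    cc2 t + NV μ sm nrm x y ω (cc1 t, cc2 t)) - NV μ sm nrm x y ω (cc1 t, cc2 t)

/-- the IVT parameter. -/
noncomputable def tau (ω : Ω) : ℝ :=
  sInf ({t : ℝ | t ∈ Set.Icc (0 : ℝ) 1 ∧ 0 < GG μ sm nrm x y ω t} ∪ {1})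

/-- the normalization factor. -/
noncomputable def kap (ω : Ω) : ℝ :=
  NV μ sm nrm x y ω (cc1 (tau μ sm nrm x y ω), cc2 (tau μ sm nrm x y ω))

variable {μ sm nrm x y}

theorem GG_cont (ω : Ω) : Continuous (GG μ sm nrm x y ω) := by
  have hK : Continuous fun t => NV μ sm nrm x y ω (cc1 t, cc2 t) :=
    (NV_cont ω).comp (cc1_cont.prodMk cc2_cont)
  have h2 : Continuous fun t => NV μ sm nrm x y ω
      (cc1 t - NV μ sm nrm x y ω (cc1 t, cc2 t),
        cc2 t + NV μ sm nrm x y ω (cc1 t, cc2 t)) :=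
    (NV_cont ω).comp ((cc1_cont.sub hK).prodMk (cc2_cont.add hK))
  exact h2.sub hK

theorem GG_meas (t : ℝ) : Measurable fun ω => GG μ sm nrm x y ω t := by
  have hK : Measurable fun ω => NV μ sm nrm x y ω (cc1 t, cc2 t) :=
    NV_meas measurable_const measurable_const
  have h2 : Measurable fun ω => NV μ sm nrm x y ω
      (cc1 t - NV μ sm nrm x y ω (cc1 t, cc2 t),
        cc2 t + NV μ sm nrm x y ω (cc1 t, cc2 t)) :=
    NV_meas ((measurable_const.sub hK)) ((measurable_const.add hK))
  exact h2.sub hK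

/-- abstract IVT for the canonical infimum parameter. -/
theorem ivt_inf {f : ℝ → ℝ} (hf : Continuous f) (h0 : f 0 ≤ 0) (h1 : 0 < f 1) :
    sInf ({t : ℝ | t ∈ Set.Icc (0 : ℝ) 1 ∧ 0 < f t} ∪ {1}) ∈ Set.Icc (0 : ℝ) 1 ∧
      f (sInf ({t : ℝ | t ∈ Set.Icc (0 : ℝ) 1 ∧ 0 < f t} ∪ {1})) = 0 := by
  set T : Set ℝ := {t : ℝ | t ∈ Set.Icc (0 : ℝ) 1 ∧ 0 < f t} ∪ {1} with hT
  have h1T : (1 : ℝ) ∈ T := Or.inr rfl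
  have hne : T.Nonempty := ⟨1, h1T⟩
  have hbdd : BddBelow T := by
    refine ⟨0, ?_⟩
    rintro t (⟨⟨ht0, _⟩, _⟩ | rfl)
    · exact ht0
    · norm_num
  set τ := sInf T with hτ
  have hτ1 : τ ≤ 1 := csInf_le hbdd h1T
  have hτ0 : 0 ≤ τ := by
    refine le_csInf hne ?_
    rintro t (⟨⟨ht0, _⟩, _⟩ | rfl)
    · exact ht0
    · norm_num
  have hlb : ∀ t ∈ T, τ ≤ t := fun t ht => csInf_le hbdd ht
  have hge : 0 ≤ f τ := by
    by_contra hc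
    push_neg at hc
    have hopen : IsOpen {t : ℝ | f t < 0} := isOpen_lt hf continuous_const
    obtain ⟨δ, hδ, hball⟩ := Metric.isOpen_iff.mp hopen τ hc
    have hlb2 : ∀ t ∈ T, τ + δ ≤ t := by
      intro t ht
      by_contra hlt
      push_neg at hlt
      have htτ : τ ≤ t := hlb t ht
      have hmem : t ∈ Metric.ball τ δ := by
        rw [Metric.mem_ball, Real.dist_eq, abs_of_nonneg (by linarith)]
        linarith
      have := hball hmem
      rcases ht with ⟨_, hpos⟩ | rfl
      · exact absurd this (by simp only [Set.mem_setOf_eq]; linarith)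
      · exact absurd this (by simp only [Set.mem_setOf_eq]; linarith)
    have := le_csInf hne hlb2
    rw [← hτ] at this
    linarith
  have hle : f τ ≤ 0 := by
    by_contra hc
    push_neg at hc
    have hτpos : 0 < τ := by
      rcases lt_or_eq_of_le hτ0 with h | h
      · exact h
      · exfalso; rw [← h] at hc; linarith
    have hopen : IsOpen {t : ℝ | 0 < f t} := isOpen_lt continuous_const hf
    obtain ⟨δ, hδ, hball⟩ := Metric.isOpen_iff.mp hopen τ hc
    set t := max 0 (τ - δ / 2) with htdef
    have ht0 : 0 ≤ t := le_max_left _ _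
    have htτ : t < τ := by
      rw [htdef]
      apply max_lt hτpos
      linarith
    have htmem : t ∈ Metric.ball τ δ := by
      rw [Metric.mem_ball, Real.dist_eq, abs_of_nonpos (by linarith)]
      have : τ - δ / 2 ≤ t := le_max_right _ _
      linarith
    have hft : 0 < f t := hball htmem
    have htT : t ∈ T := Or.inl ⟨⟨ht0, le_trans (le_of_lt htτ) hτ1⟩, hft⟩
    have := hlb t htT
    linarith
  exact ⟨⟨hτ0, hτ1⟩, le_antisymm hle hge⟩

theorem tau_lt_iff (ω : Ω) (s : ℝ) :
    tau μ sm nrm x y ω < s ↔ 1 < s ∨ ∃ q : ℚ, 0 ≤ (q : ℝ) ∧ (q : ℝ) ≤ 1 ∧ (q : ℝ) < s ∧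
      0 < GG μ sm nrm x y ω (q : ℝ) := by
  set T : Set ℝ := {t : ℝ | t ∈ Set.Icc (0 : ℝ) 1 ∧ 0 < GG μ sm nrm x y ω t} ∪ {1} with hT
  have h1T : (1 : ℝ) ∈ T := Or.inr rfl
  have hne : T.Nonempty := ⟨1, h1T⟩
  have hbdd : BddBelow T := by
    refine ⟨0, ?_⟩
    rintro t (⟨⟨ht0, _⟩, _⟩ | rfl)
    · exact ht0
    · norm_num
  rw [tau, ← hT, csInf_lt_iff hbdd hne]
  constructor
  · rintro ⟨t, ht, hts⟩
    rcases ht with ⟨⟨ht0, ht1⟩, hpos⟩ | rfl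
    · -- t ∈ [0,1], G t > 0, t < s : find a rational
      by_cases hq : ∃ q : ℚ, (q : ℝ) = t
      · obtain ⟨q, rfl⟩ := hq
        exact Or.inr ⟨q, ht0, ht1, hts, hpos⟩
      · have htpos : 0 < t := by
          rcases lt_or_eq_of_le ht0 with h | h
          · exact h
          · exact absurd ⟨(0 : ℚ), by rw [← h]; norm_num⟩ hq
        have hopen : IsOpen {u : ℝ | 0 < GG μ sm nrm x y ω u} :=
          isOpen_lt continuous_const (GG_cont ω)
        obtain ⟨δ, hδ, hball⟩ := Metric.isOpen_iff.mp hopen t hpos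
        obtain ⟨q, hq1, hq2⟩ := exists_rat_btwn (show max 0 (t - δ) < t by
          apply max_lt htpos; linarith)
        refine Or.inr ⟨q, ?_, ?_, ?_, ?_⟩
        · have := le_max_left 0 (t - δ); linarith
        · linarith
        · linarith
        · apply hball
          rw [Metric.mem_ball, Real.dist_eq, abs_of_nonpos (by linarith)]
          have := le_max_right 0 (t - δ)
          linarith
    · exact Or.inl hts
  · rintro (hs | ⟨q, hq0, hq1, hqs, hqpos⟩)
    · exact ⟨1, h1T, hs⟩
    · exact ⟨(q : ℝ), Or.inl ⟨⟨hq0, hq1⟩, hqpos⟩, hqs⟩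

theorem tau_meas : Measurable (tau μ sm nrm x y) := by
  refine measurable_of_Iio fun s => ?_
  have : tau μ sm nrm x y ⁻¹' Set.Iio s
      = {ω : Ω | 1 < s} ∪ ⋃ (q : ℚ) (_ : 0 ≤ (q : ℝ) ∧ (q : ℝ) ≤ 1 ∧ (q : ℝ) < s),
        {ω : Ω | 0 < GG μ sm nrm x y ω (q : ℝ)} := by
    ext ω
    simp only [Set.mem_preimage, Set.mem_Iio, tau_lt_iff, Set.mem_union, Set.mem_setOf_eq,
      Set.mem_iUnion]
    constructor
    · rintro (h | ⟨q, h0, h1, h2, h3⟩)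
      · exact Or.inl h
      · exact Or.inr ⟨q, ⟨h0, h1, h2⟩, h3⟩
    · rintro (h | ⟨q, ⟨h0, h1, h2⟩, h3⟩)
      · exact Or.inl h
      · exact Or.inr ⟨q, h0, h1, h2, h3⟩
  rw [this]
  refine MeasurableSet.union (MeasurableSet.const _) ?_
  refine MeasurableSet.iUnion fun q => ?_
  refine MeasurableSet.iUnion fun _ => ?_
  exact measurableSet_lt measurable_const (GG_meas _)

theorem kap_meas : Measurable (kap μ sm nrm x y) :=
  NV_meas (cc1_cont.measurable.comp tau_meas) (cc2_cont.measurable.comp tau_meas)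

theorem kap_nonneg (ω : Ω) : 0 ≤ kap μ sm nrm x y ω := NV_nonneg ω _

end Curve
-- ### two more helpers
section MoreAux
variable {S : Type*} [AddCommGroup S]

theorem abs_ind {A : Set Ω} (hA : MeasurableSet A) : |ind μ A| = ind μ A := by
  refine l0_ext ?_
  filter_upwards [AEEqFun.coeFn_abs (ind μ A), ind_coe hA] with ω e1 e2
  rw [e1, e2]
  by_cases hω : ω ∈ A
  · rw [Set.indicator_of_mem hω]; norm_num
  · rw [Set.indicator_of_notMem hω]; norm_num

end MoreAux


theorem exists_sphere_pair_of_indep' {Ω : Type*} [MeasurableSpace Ω] (μ : Measure Ω)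
    [IsProbabilityMeasure μ] {S : Type*} [AddCommGroup S]
    (sm : L0 μ → S → S) (nrm : S → L0 μ) (hRN : IsRNModule μ sm nrm)
    (E : Set Ω) (hEm : MeasurableSet E) (hEpos : 0 < μ E)
    (x y : S) (hx1 : nrm x ≤ 1) (hy : nrm y ≤ 1)
    (hind : Indep sm x y E) :
    ∃ u v : S, nrm u = ind μ E ∧ nrm v = ind μ E ∧ u - v = sm (ind μ E) (x - y) := by
  classical
  set R : L0 μ := nrm (x - y) with hRdef
  -- the pointwise coefficient-norm function
  have finst : ∀ (a b : L0 μ) (z : S), (sm a x + sm b y = z) →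
      ∀ᵐ ω ∂μ, NV μ sm nrm x y ω (a ω, b ω) = nrm z ω := by
    intro a b z hz
    filter_upwards [formula hRN hx1 hy a b] with ω e
    rw [← hz]
    exact e.symm
  -- R is between 0 and 2 a.e.
  have hR2L0 : R ≤ nrm x + nrm y := by
    have h0 := hRN.nrm_add x (-y)
    rw [← sub_eq_add_neg, hRN.nrm_neg' y] at h0
    exact h0
  have haeR : ∀ᵐ ω ∂μ, 0 ≤ R ω ∧ R ω ≤ 2 := by
    filter_upwards [AEEqFun.coeFn_le.mpr (hRN.nrm_nonneg (x - y)),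
      AEEqFun.coeFn_le.mpr hR2L0, AEEqFun.coeFn_le.mpr hx1, AEEqFun.coeFn_le.mpr hy,
      AEEqFun.coeFn_add (nrm x) (nrm y), AEEqFun.coeFn_zero (β := ℝ) (μ := μ),
      AEEqFun.coeFn_one (β := ℝ) (μ := μ)] with ω e1 e2 e3 e4 e5 e6 e7
    rw [e6, Pi.zero_apply] at e1
    rw [e5, Pi.add_apply] at e2
    rw [e7, Pi.one_apply] at e3 e4
    exact ⟨e1, by linarith⟩
  -- instance: N(1,-1) = R
  have hNr : ∀ᵐ ω ∂μ, NV μ sm nrm x y ω (1, -1) = R ω := by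
    have hcomb : sm (1 : L0 μ) x + sm (-(1 : L0 μ)) y = x - y := by
      rw [hRN.neg_smul', hRN.one_smul, hRN.one_smul, ← sub_eq_add_neg]
    filter_upwards [finst (1 : L0 μ) (-(1 : L0 μ)) (x - y) hcomb,
      AEEqFun.coeFn_one (β := ℝ) (μ := μ), AEEqFun.coeFn_neg (1 : L0 μ)] with ω e1 e2 e3
    rw [e2, Pi.one_apply] at e1
    rw [e3, Pi.neg_apply, e2, Pi.one_apply] at e1
    exact e1
  -- instance: N(-1,1) = R
  have hNr1 : ∀ᵐ ω ∂μ, NV μ sm nrm x y ω (-1, 1) = R ω := by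
    have hcomb : sm (-(1 : L0 μ)) x + sm (1 : L0 μ) y = -(x - y) := by
      rw [hRN.neg_smul', hRN.one_smul, hRN.one_smul]
      abel
    filter_upwards [finst (-(1 : L0 μ)) (1 : L0 μ) (-(x - y)) hcomb,
      AEEqFun.coeFn_one (β := ℝ) (μ := μ), AEEqFun.coeFn_neg (1 : L0 μ)]
      with ω e1 e2 e3
    rw [e2, Pi.one_apply, e3, Pi.neg_apply, e2, Pi.one_apply, hRN.nrm_neg' (x - y)] at e1
    exact e1
  -- instance: N(1 - r, r - 1) = |1-r| r
  have hG0raw : ∀ᵐ ω ∂μ, NV μ sm nrm x y ω (1 - R ω, R ω - 1) = |1 - R ω| * R ω := by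
    have hcomb : sm (1 - R) x + sm (R - 1) y = sm (1 - R) (x - y) := by
      have hRm : (R - 1 : L0 μ) = -(1 - R) := (neg_sub (1 : L0 μ) R).symm
      rw [hRm, hRN.neg_smul', hRN.smul_sub']
      abel
    have hnz : nrm (sm (1 - R) (x - y)) = |1 - R| * R := hRN.nrm_smul _ _
    filter_upwards [finst (1 - R) (R - 1) _ hcomb,
      AEEqFun.coeFn_sub (1 : L0 μ) R, AEEqFun.coeFn_sub R (1 : L0 μ),
      AEEqFun.coeFn_one (β := ℝ) (μ := μ),
      AEEqFun.coeFn_mul |1 - R| R, AEEqFun.coeFn_abs (1 - R)] with ω e1 e2 e3 e4 e5 e6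
    rw [e2, Pi.sub_apply, e4, Pi.one_apply, e3, Pi.sub_apply, e4, Pi.one_apply, hnz] at e1
    rw [e1, e5, Pi.mul_apply, e6, e2, Pi.sub_apply, e4, Pi.one_apply]
  -- instance: N(-(1+r), 1+r) = |1+r| r
  have hG1raw : ∀ᵐ ω ∂μ, NV μ sm nrm x y ω (-(1 + R ω), 1 + R ω) = |1 + R ω| * R ω := by
    have hcomb : sm (-(1 + R)) x + sm (1 + R) y = -(sm (1 + R) (x - y)) := by
      rw [hRN.neg_smul', hRN.smul_sub']
      abel
    have hnz : nrm (-(sm (1 + R) (x - y))) = |1 + R| * R := by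
      rw [hRN.nrm_neg', hRN.nrm_smul]
    filter_upwards [finst (-(1 + R)) (1 + R) _ hcomb,
      AEEqFun.coeFn_neg (1 + R), AEEqFun.coeFn_add (1 : L0 μ) R,
      AEEqFun.coeFn_one (β := ℝ) (μ := μ),
      AEEqFun.coeFn_mul |1 + R| R, AEEqFun.coeFn_abs (1 + R)] with ω e1 e2 e3 e4 e5 e6
    rw [e2, Pi.neg_apply, e3, Pi.add_apply, e4, Pi.one_apply, hnz] at e1
    rw [e1, e5, Pi.mul_apply, e6, e3, Pi.add_apply, e4, Pi.one_apply]
  -- instance: N(0,0) = 0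
  have hN0 : ∀ᵐ ω ∂μ, NV μ sm nrm x y ω (0, 0) = 0 := by
    have hcomb : sm (0 : L0 μ) x + sm (0 : L0 μ) y = (0 : S) := by
      rw [hRN.zero_smul', hRN.zero_smul', add_zero]
    filter_upwards [finst 0 0 0 hcomb, AEEqFun.coeFn_zero (β := ℝ) (μ := μ)] with ω e1 e2
    rw [e2, Pi.zero_apply] at e1
    rw [e1, hRN.nrm_zero', e2, Pi.zero_apply]
  -- R > 0 a.e. on E, by independence
  have rpos : ∀ᵐ ω ∂μ, ω ∈ E → 0 < R ω := by
    set F : Set Ω := E ∩ {ω | R ω ≤ 0} with hFdef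
    have hF : MeasurableSet F := hEm.inter (measurableSet_le R.measurable measurable_const)
    have hprod : ind μ F * R = 0 := by
      refine l0_ext ?_
      filter_upwards [AEEqFun.coeFn_mul (ind μ F) R, ind_coe hF,
        AEEqFun.coeFn_le.mpr (hRN.nrm_nonneg (x - y)),
        AEEqFun.coeFn_zero (β := ℝ) (μ := μ)] with ω e1 e2 e3 e4
      rw [e1, Pi.mul_apply, e2, e4, Pi.zero_apply]
      rw [e4, Pi.zero_apply] at e3
      by_cases hω : ω ∈ F
      · rw [Set.indicator_of_mem hω]
        have : R ω ≤ 0 := hω.2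
        have : R ω = 0 := le_antisymm this e3
        rw [this, mul_zero]
      · rw [Set.indicator_of_notMem hω, zero_mul]
    have hz0 : sm (ind μ F) (x - y) = 0 := by
      refine hRN.nrm_eq_zero _ ?_
      rw [hRN.nrm_smul, abs_ind hF, ← hRdef, hprod]
    have hFE : ind μ F * ind μ E = ind μ F := by
      refine l0_ext ?_
      filter_upwards [AEEqFun.coeFn_mul (ind μ F) (ind μ E), ind_coe hF, ind_coe hEm]
        with ω e1 e2 e3
      rw [e1, Pi.mul_apply, e2, e3]
      by_cases hω : ω ∈ F
      · rw [Set.indicator_of_mem hω, Set.indicator_of_mem hω.1]; norm_num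
      · rw [Set.indicator_of_notMem hω, zero_mul]
    have hFE' : (-(ind μ F)) * ind μ E = -(ind μ F) := by
      refine l0_ext ?_
      filter_upwards [AEEqFun.coeFn_mul (-(ind μ F)) (ind μ E),
        AEEqFun.coeFn_neg (ind μ F), ind_coe hF, ind_coe hEm] with ω e1 e2 e3 e4
      rw [e1, Pi.mul_apply, e2, Pi.neg_apply, e3, e4]
      by_cases hω : ω ∈ F
      · rw [Set.indicator_of_mem hω, Set.indicator_of_mem hω.1]; norm_num
      · rw [Set.indicator_of_notMem hω, neg_zero, zero_mul]
    have hcomb0 : sm (ind μ F * ind μ E) x + sm ((-(ind μ F)) * ind μ E) y = 0 := by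
      rw [hFE, hFE', hRN.neg_smul', ← sub_eq_add_neg, ← hRN.smul_sub']
      exact hz0
    obtain ⟨hξ0, _⟩ := hind (ind μ F) (-(ind μ F)) hcomb0
    rw [hFE] at hξ0
    have hFnull : μ F = 0 := null_of_ind_eq_zero hF hξ0
    have hFae : ∀ᵐ ω ∂μ, ω ∉ F := by
      rw [ae_iff]
      push_neg
      simpa using hFnull
    filter_upwards [hFae] with ω hω hE
    by_contra hc
    push_neg at hc
    exact hω ⟨hE, hc⟩
  -- G at the endpoints
  have hG0 : ∀ᵐ ω ∂μ, ω ∈ E → GG μ sm nrm x y ω 0 ≤ 0 := by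
    filter_upwards [hNr, hG0raw, haeR] with ω e1 e2 e3 hE
    have hc1 : cc1 0 = 1 := by norm_num [cc1]
    have hc2 : cc2 0 = (-1 : ℝ) := by norm_num [cc2]
    have egg : GG μ sm nrm x y ω 0 = |1 - R ω| * R ω - R ω := by
      rw [GG, hc1, hc2, e1, show (-1 : ℝ) + R ω = R ω - 1 by ring, e2]
    rw [egg]
    have habs : |1 - R ω| ≤ 1 := abs_le.mpr ⟨by linarith [e3.2], by linarith [e3.1]⟩
    nlinarith [e3.1, e3.2]
  have hG1 : ∀ᵐ ω ∂μ, ω ∈ E → 0 < GG μ sm nrm x y ω 1 := by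
    filter_upwards [hNr1, hG1raw, haeR, rpos] with ω e1 e2 e3 e4 hE
    have hc1 : cc1 1 = (-1 : ℝ) := by norm_num [cc1]
    have hc2 : cc2 1 = (1 : ℝ) := by norm_num [cc2]
    have egg : GG μ sm nrm x y ω 1 = |1 + R ω| * R ω - R ω := by
      rw [GG, hc1, hc2, e1, show (-1 : ℝ) - R ω = -(1 + R ω) by ring, e2]
    rw [egg]
    have hr := e4 hE
    rw [abs_of_nonneg (by linarith [e3.1] : (0:ℝ) ≤ 1 + R ω)]
    nlinarith
  -- the IVT parameter works a.e. on E
  have htau : ∀ᵐ ω ∂μ, ω ∈ E → (tau μ sm nrm x y ω ∈ Set.Icc (0:ℝ) 1 ∧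
      GG μ sm nrm x y ω (tau μ sm nrm x y ω) = 0) := by
    filter_upwards [hG0, hG1] with ω e0 e1 hE
    have := ivt_inf (GG_cont (μ := μ) (sm := sm) (nrm := nrm) (x := x) (y := y) ω)
      (e0 hE) (e1 hE)
    exact this
  -- the L⁰ coefficients
  set AA : L0 μ := AEEqFun.mk (fun ω => cc1 (tau μ sm nrm x y ω))
    ((cc1_cont.measurable.comp tau_meas).aestronglyMeasurable) with hAA
  set BB : L0 μ := AEEqFun.mk (fun ω => cc2 (tau μ sm nrm x y ω))
    ((cc2_cont.measurable.comp tau_meas).aestronglyMeasurable) with hBB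
  set KK : L0 μ := AEEqFun.mk (kap μ sm nrm x y) (kap_meas.aestronglyMeasurable) with hKK
  have hz1 : ∀ᵐ ω ∂μ, nrm (sm AA x + sm BB y) ω = kap μ sm nrm x y ω := by
    filter_upwards [formula hRN hx1 hy AA BB,
      AEEqFun.coeFn_mk (μ := μ) (fun ω => cc1 (tau μ sm nrm x y ω)) _,
      AEEqFun.coeFn_mk (μ := μ) (fun ω => cc2 (tau μ sm nrm x y ω)) _] with ω e1 e2 e3
    rw [e1, hAA, hBB, e2, e3]
    rfl
  -- κ > 0 a.e. on E, by independence
  have hkpos : ∀ᵐ ω ∂μ, ω ∈ E → 0 < kap μ sm nrm x y ω := by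
    set F : Set Ω := E ∩ {ω | kap μ sm nrm x y ω ≤ 0} with hFdef
    have hF : MeasurableSet F := hEm.inter (measurableSet_le kap_meas measurable_const)
    set ξ : L0 μ := AEEqFun.mk (F.indicator fun ω => cc1 (tau μ sm nrm x y ω))
      (((cc1_cont.measurable.comp tau_meas).indicator hF).aestronglyMeasurable) with hξdef
    set η : L0 μ := AEEqFun.mk (F.indicator fun ω => cc2 (tau μ sm nrm x y ω))
      (((cc2_cont.measurable.comp tau_meas).indicator hF).aestronglyMeasurable) with hηdef
    have hnz : nrm (sm ξ x + sm η y) = 0 := by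
      refine l0_ext ?_
      filter_upwards [formula hRN hx1 hy ξ η,
        AEEqFun.coeFn_mk (μ := μ) (F.indicator fun ω => cc1 (tau μ sm nrm x y ω)) _,
        AEEqFun.coeFn_mk (μ := μ) (F.indicator fun ω => cc2 (tau μ sm nrm x y ω)) _,
        hN0, AEEqFun.coeFn_zero (β := ℝ) (μ := μ)] with ω e1 e2 e3 e4 e5
      rw [e1, e5, Pi.zero_apply, hξdef, hηdef, e2, e3]
      by_cases hω : ω ∈ F
      · rw [Set.indicator_of_mem hω, Set.indicator_of_mem hω]
        have hk0 : kap μ sm nrm x y ω = 0 := le_antisymm hω.2 (kap_nonneg ω)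
        have : NV μ sm nrm x y ω (cc1 (tau μ sm nrm x y ω), cc2 (tau μ sm nrm x y ω))
            = kap μ sm nrm x y ω := rfl
        rw [this, hk0]
      · rw [Set.indicator_of_notMem hω, Set.indicator_of_notMem hω, e4]
    have hz0 : sm ξ x + sm η y = 0 := hRN.nrm_eq_zero _ hnz
    have hξE : ξ * ind μ E = ξ := by
      refine l0_ext ?_
      filter_upwards [AEEqFun.coeFn_mul ξ (ind μ E), ind_coe hEm,
        AEEqFun.coeFn_mk (μ := μ) (F.indicator fun ω => cc1 (tau μ sm nrm x y ω)) _]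
        with ω e1 e2 e3
      rw [e1, Pi.mul_apply, e2, hξdef, e3]
      by_cases hω : ω ∈ F
      · rw [Set.indicator_of_mem hω, Set.indicator_of_mem hω.1, mul_one]
      · rw [Set.indicator_of_notMem hω, zero_mul]
    have hηE : η * ind μ E = η := by
      refine l0_ext ?_
      filter_upwards [AEEqFun.coeFn_mul η (ind μ E), ind_coe hEm,
        AEEqFun.coeFn_mk (μ := μ) (F.indicator fun ω => cc2 (tau μ sm nrm x y ω)) _]
        with ω e1 e2 e3
      rw [e1, Pi.mul_apply, e2, hηdef, e3]
      by_cases hω : ω ∈ F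
      · rw [Set.indicator_of_mem hω, Set.indicator_of_mem hω.1, mul_one]
      · rw [Set.indicator_of_notMem hω, zero_mul]
    have hcomb0 : sm (ξ * ind μ E) x + sm (η * ind μ E) y = 0 := by
      rw [hξE, hηE]; exact hz0
    obtain ⟨hξ0, hη0⟩ := hind ξ η hcomb0
    rw [hξE] at hξ0
    rw [hηE] at hη0
    have hae1 : ∀ᵐ ω ∂μ, F.indicator (fun ω => cc1 (tau μ sm nrm x y ω)) ω = 0 := by
      rw [hξdef] at hξ0
      filter_upwards [AEEqFun.coeFn_mk (μ := μ)
          (F.indicator fun ω => cc1 (tau μ sm nrm x y ω)) _,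
        AEEqFun.coeFn_zero (β := ℝ) (μ := μ)] with ω e1 e2
      rw [← e1, hξ0, e2, Pi.zero_apply]
    have hae2 : ∀ᵐ ω ∂μ, F.indicator (fun ω => cc2 (tau μ sm nrm x y ω)) ω = 0 := by
      rw [hηdef] at hη0
      filter_upwards [AEEqFun.coeFn_mk (μ := μ)
          (F.indicator fun ω => cc2 (tau μ sm nrm x y ω)) _,
        AEEqFun.coeFn_zero (β := ℝ) (μ := μ)] with ω e1 e2
      rw [← e1, hη0, e2, Pi.zero_apply]
    filter_upwards [hae1, hae2] with ω e1 e2 hE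
    by_contra hc
    push_neg at hc
    have hωF : ω ∈ F := ⟨hE, hc⟩
    rw [Set.indicator_of_mem hωF] at e1 e2
    exact cc_ne_zero (tau μ sm nrm x y ω) ⟨e1, e2⟩
  -- the normalizer
  set ι : L0 μ := AEEqFun.mk (E.indicator fun ω => (kap μ sm nrm x y ω)⁻¹)
    ((kap_meas.inv.indicator hEm).aestronglyMeasurable) with hιdef
  have hioky : ι * KK = ind μ E := by
    refine l0_ext ?_
    filter_upwards [AEEqFun.coeFn_mul ι KK, ind_coe hEm,
      AEEqFun.coeFn_mk (μ := μ) (E.indicator fun ω => (kap μ sm nrm x y ω)⁻¹) _,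
      AEEqFun.coeFn_mk (μ := μ) (kap μ sm nrm x y) _, hkpos] with ω e1 e2 e3 e4 e5
    rw [e1, Pi.mul_apply, e2, hιdef, hKK, e3, e4]
    by_cases hω : ω ∈ E
    · rw [Set.indicator_of_mem hω, Set.indicator_of_mem hω]
      exact inv_mul_cancel₀ (ne_of_gt (e5 hω))
    · rw [Set.indicator_of_notMem hω, Set.indicator_of_notMem hω, zero_mul]
  -- the two unit-norm elements
  refine ⟨sm ι (sm AA x + sm BB y), sm ι (sm AA x + sm BB y) - sm (ind μ E) (x - y),
    ?_, ?_, by abel⟩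
  · -- ‖u‖ = I_E
    rw [hRN.nrm_smul]
    refine l0_ext ?_
    filter_upwards [AEEqFun.coeFn_mul |ι| (nrm (sm AA x + sm BB y)),
      AEEqFun.coeFn_abs ι,
      AEEqFun.coeFn_mk (μ := μ) (E.indicator fun ω => (kap μ sm nrm x y ω)⁻¹) _,
      hz1, hkpos, ind_coe hEm] with ω e1 e2 e3 e4 e5 e6
    rw [e1, Pi.mul_apply, e2, hιdef, e3, e4, e6]
    by_cases hω : ω ∈ E
    · rw [Set.indicator_of_mem hω, Set.indicator_of_mem hω]
      have hk := e5 hω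
      rw [abs_of_pos (inv_pos.mpr hk)]
      exact inv_mul_cancel₀ (ne_of_gt hk)
    · rw [Set.indicator_of_notMem hω, Set.indicator_of_notMem hω, abs_zero, zero_mul]
  · -- ‖v‖ = I_E
    have hz2eq : sm AA x + sm BB y - sm KK (x - y) = sm (AA - KK) x + sm (BB + KK) y := by
      rw [hRN.sub_smul', hRN.add_smul, hRN.smul_sub']
      abel
    have hveq : sm ι (sm AA x + sm BB y) - sm (ind μ E) (x - y)
        = sm ι (sm (AA - KK) x + sm (BB + KK) y) := by
      rw [← hz2eq, hRN.smul_sub' ι (sm AA x + sm BB y) (sm KK (x - y)),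
        ← hRN.mul_smul, hioky]
    rw [hveq, hRN.nrm_smul]
    have hz2 : ∀ᵐ ω ∂μ, ω ∈ E → nrm (sm (AA - KK) x + sm (BB + KK) y) ω
        = kap μ sm nrm x y ω := by
      filter_upwards [formula hRN hx1 hy (AA - KK) (BB + KK),
        AEEqFun.coeFn_sub AA KK, AEEqFun.coeFn_add BB KK,
        AEEqFun.coeFn_mk (μ := μ) (fun ω => cc1 (tau μ sm nrm x y ω)) _,
        AEEqFun.coeFn_mk (μ := μ) (fun ω => cc2 (tau μ sm nrm x y ω)) _,
        AEEqFun.coeFn_mk (μ := μ) (kap μ sm nrm x y) _, htau] with ω e1 e2 e3 e4 e5 e6 e7 hE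
      rw [e1, e2, Pi.sub_apply, e3, Pi.add_apply, hAA, hBB, hKK, e4, e5, e6]
      have hGt := (e7 hE).2
      have : GG μ sm nrm x y ω (tau μ sm nrm x y ω)
          = NV μ sm nrm x y ω (cc1 (tau μ sm nrm x y ω) - kap μ sm nrm x y ω,
              cc2 (tau μ sm nrm x y ω) + kap μ sm nrm x y ω) - kap μ sm nrm x y ω := rfl
      rw [this] at hGt
      linarith
    refine l0_ext ?_
    filter_upwards [AEEqFun.coeFn_mul |ι| (nrm (sm (AA - KK) x + sm (BB + KK) y)),
      AEEqFun.coeFn_abs ι,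
      AEEqFun.coeFn_mk (μ := μ) (E.indicator fun ω => (kap μ sm nrm x y ω)⁻¹) _,
      hz2, hkpos, ind_coe hEm] with ω e1 e2 e3 e4 e5 e6
    rw [e1, Pi.mul_apply, e2, hιdef, e3, e6]
    by_cases hω : ω ∈ E
    · rw [Set.indicator_of_mem hω, Set.indicator_of_mem hω]
      have hk := e5 hω
      rw [e4 hω, abs_of_pos (inv_pos.mpr hk)]
      exact inv_mul_cancel₀ (ne_of_gt hk)
    · rw [Set.indicator_of_notMem hω, Set.indicator_of_notMem hω, abs_zero, zero_mul]


/-- **Lemma 3.1.** If `‖x‖ = I_{A_{xy}}`, `‖y‖ ≤ 1` and `x, y` are `L⁰`-independent on `E`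
with `P(E) > 0`, then there exist `u_E, v_E` with `‖u_E‖ = ‖v_E‖ = I_E` and
`u_E - v_E = I_E (x - y)`. -/
theorem exists_sphere_pair_of_indep {Ω : Type*} [MeasurableSpace Ω] (μ : Measure Ω)
    [IsProbabilityMeasure μ] {S : Type*} [AddCommGroup S]
    (sm : L0 μ → S → S) (nrm : S → L0 μ) (hRN : IsRNModule μ sm nrm)
    (E : Set Ω) (hEm : MeasurableSet E) (hEpos : 0 < μ E)
    (x y : S) (hx : nrm x = ind μ (Axy nrm x y)) (hy : nrm y ≤ 1)
    (hind : Indep sm x y E) :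
    ∃ u v : S, nrm u = ind μ E ∧ nrm v = ind μ E ∧ u - v = sm (ind μ E) (x - y) := by
  have hx1 : nrm x ≤ 1 := by rw [hx]; exact ind_le_one _
  exact exists_sphere_pair_of_indep' μ sm nrm hRN E hEm hEpos x y hx1 hy hind

end RNM
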